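/- For x ≥ 1 and 0 ≤ v ≤ 1/3, we have max{v, 1-v} · (1 - √x)^2 ≥ v(x-1)(1 - ((x+1)/2)^(v-1)). -/

import Mathlib

theorem wv_nonneg_low (x v : ℝ) (hx : 1 ≤ x) (hv0 : 0 ≤ v) (hv1 : v ≤ 1 / 3) :
    v * (x - 1) * (1 - ((x + 1) / 2) ^ (v - 1)) ≤ max v (1 - v) * (1 - Real.sqrt x) ^ 2 := by
  have hmax : max v (1 - v) = 1 - v := max_eq_right (by linarith)
  rw [hmax]
  set s := Real.sqrt x with hs
  have hs1 : 1 ≤ s := by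
    rw [hs, show (1:ℝ) = Real.sqrt 1 by simp]
    exact Real.sqrt_le_sqrt hx
  have hs2 : s ^ 2 = x := Real.sq_sqrt (by linarith)
  set t : ℝ := (x + 1) / 2 with ht
  have ht1 : 1 ≤ t := by rw [ht]; linarith
  set a : ℝ := (1 - v) * (t - 1) with ha
  have ha0 : 0 ≤ a := mul_nonneg (by linarith) (by linarith)
  have hbern : t ^ (1 - v) ≤ 1 + a := by
    have := rpow_one_add_le_one_add_mul_self (s := t - 1)
      (by linarith) (p := 1 - v) (by linarith) (by linarith)
    rw [show (1 : ℝ) + (t - 1) = t by ring] at this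
    rw [ha]; linarith [this]
  have htpos : (0:ℝ) < t := by linarith
  have hrp : 1 / (1 + a) ≤ t ^ (v - 1) := by
    rw [show v - 1 = -(1 - v) by ring, Real.rpow_neg htpos.le, ← one_div]
    apply one_div_le_one_div_of_le (Real.rpow_pos_of_pos htpos _) hbern
  have hkey : 1 - t ^ (v - 1) ≤ a / (1 + a) := by
    have : 1 - 1 / (1 + a) = a / (1 + a) := by field_simp; ring
    linarith [hrp, this.ge, this.le]
  have hvx : 0 ≤ v * (x - 1) := mul_nonneg hv0 (by linarith)
  calc v * (x - 1) * (1 - t ^ (v - 1)) ≤ v * (x - 1) * (a / (1 + a)) :=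
        mul_le_mul_of_nonneg_left hkey hvx
    _ ≤ (1 - v) * (1 - s) ^ 2 := by
        rw [mul_div_assoc', div_le_iff₀ (by linarith : (0:ℝ) < 1 + a)]
        rw [ha, ht]
        clear_value a t s
        clear ha ht hs hbern hrp hkey hvx ha0 ht1 htpos hmax
        subst hs2
        nlinarith [mul_nonneg (mul_nonneg (by linarith : (0:ℝ) ≤ 1 - v) (sq_nonneg (s-1))) (by nlinarith [sq_nonneg (s-1)] : (0:ℝ) ≤ s^2 - 2*s + 3), mul_nonneg (mul_nonneg (mul_nonneg (by linarith : (0:ℝ) ≤ 1 - v) (sq_nonneg (s-1))) (by linarith : (0:ℝ) ≤ 1/3 - v)) (by nlinarith : (0:ℝ) ≤ s^2 + s)]
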